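/- arXiv:2605.10692 — 6 statements merged into one kernel-verified Lean document; each statement's English description precedes it below -/
import Mathlib

section
/- Let G be a simple graph on a finite vertex set V and let c : V → C be any vertex coloring (not necessarily proper). Let S be a list of colors of length at least 2, written S = s₁ :: s₂ :: S', and let v ∈ V with c(v) = s₁. Then B_S(v) = B_{s₁ :: S'}(v) ∪ ⋃ { B_{s₂ :: S'}(w) : w ∈ N[v], c(w) = s₂ }, where N[v] = {v} ∪ {w : w adjacent to v} is the closed neighborhood of v, s₁ :: S' is the list obtained from S by deleting its second entry, and s₂ :: S' is the tail of S. -/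
/-- Given a vertex coloring `c` and a list `S` of colors, `ballS G c S v` is the set of
vertices `u` reachable from `v` by a path whose list of vertex colors (read in order from
`v` to `u`) is a (not necessarily contiguous) sublist of `S`. -/
def ballS {V C : Type*} (G : SimpleGraph V) (c : V → C) (S : List C) (v : V) : Set V :=
  {u | ∃ p : G.Walk v u, p.IsPath ∧ (p.support.map c).Sublist S}

/-- the ball-growing equation. For any simple graph on a finite vertex set,
any (not necessarily proper) coloring `c`, a color list `S = s₁ :: s₂ :: S'`, and a vertex
`v` with `c v = s₁`,
`B_S(v) = B_{s₁::S'}(v) ∪ ⋃ {B_{s₂::S'}(w) : w ∈ N[v], c w = s₂}`,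
where `N[v]` is the closed neighborhood of `v`. -/
theorem stmt_5 {V C : Type*} [Fintype V] (G : SimpleGraph V) (c : V → C)
    (s₁ s₂ : C) (S' : List C) (v : V) (hv : c v = s₁) :
    ballS G c (s₁ :: s₂ :: S') v =
      ballS G c (s₁ :: S') v ∪
        ⋃ w ∈ {w : V | (w = v ∨ G.Adj v w) ∧ c w = s₂}, ballS G c (s₂ :: S') w := by
  classical
  ext u
  simp only [ballS, Set.mem_union, Set.mem_iUnion, Set.mem_setOf_eq]
  constructor
  · rintro ⟨p, hp, hs⟩
    cases p with
    | nil =>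
      left
      exact ⟨.nil, SimpleGraph.Walk.IsPath.nil, by simp [hv]⟩
    | @cons _ w _ h q =>
      rw [SimpleGraph.Walk.support_cons, List.map_cons, hv] at hs
      have hs' : (q.support.map c).Sublist (s₂ :: S') := List.cons_sublist_cons.mp hs
      rw [q.support_eq_cons, List.map_cons] at hs'
      cases hs' with
      | cons _ h2 =>
        left
        refine ⟨.cons h q, hp, ?_⟩
        rw [SimpleGraph.Walk.support_cons, List.map_cons, hv, q.support_eq_cons,
          List.map_cons]
        exact List.cons_sublist_cons.mpr h2
      | cons_cons _ h2 =>
        right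
        refine ⟨w, ⟨Or.inr h, rfl⟩, q, hp.of_cons, ?_⟩
        rw [q.support_eq_cons, List.map_cons]
        exact List.cons_sublist_cons.mpr h2
  · rintro (⟨p, hp, hs⟩ | ⟨w, ⟨hw, hcw⟩, q, hq, hs⟩)
    · refine ⟨p, hp, hs.trans ?_⟩
      exact List.cons_sublist_cons.mpr (List.sublist_cons_self s₂ S')
    · rcases hw with rfl | hadj
      · exact ⟨q, hq, hs.cons s₁⟩
      · by_cases hvq : v ∈ q.support
        · refine ⟨q.dropUntil v hvq, hq.dropUntil hvq, ?_⟩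
          rw [(q.dropUntil v hvq).support_eq_cons, List.map_cons, hv]
          have hsub : ((q.dropUntil v hvq).support.tail).Sublist q.support := by
            conv_rhs => rw [← q.take_spec hvq]
            rw [SimpleGraph.Walk.support_append]
            exact List.sublist_append_right _ _
          exact List.cons_sublist_cons.mpr ((hsub.map c).trans hs)
        · refine ⟨.cons hadj q, hq.cons hvq, ?_⟩
          rw [SimpleGraph.Walk.support_cons, List.map_cons, hv]
          exact List.cons_sublist_cons.mpr hs
end

section
/- Let C ⊆ ℝ² be a finite set, let p ∈ C, and suppose ‖c − p‖ ≤ 1 for every c ∈ C. Let F = ⋃_{c∈C} B̄(c,1). Let y ∈ ℝ² with ‖y − p‖ < 1/2 and let u ∈ ℝ² with ‖u‖ = 1. Then there is exactly one t ≥ 0 such that y + t·u lies on the frontier (topological boundary) of F. -/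
open Metric

set_option maxHeartbeats 1000000

lemma star_key {E : Type*} [NormedAddCommGroup E] [InnerProductSpace ℝ E]
    (p c y z : E) (s : ℝ) (hs0 : 0 ≤ s) (hs1 : s ≤ 1)
    (hy : ‖y - p‖ ≤ 1/2) (hc : ‖c - p‖ ≤ 1) (hz : ‖z - c‖ ≤ 1) :
    ‖(1-s) • y + s • z - p‖ ≤ 1 ∨ ‖(1-s) • y + s • z - c‖ ≤ 1 := by
  by_cases hA : ‖(1-s) • y + s • z - p‖ ≤ 1
  · exact Or.inl hA
  push_neg at hA
  right
  set a := y - p with ha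
  set b := z - p with hb
  set d := c - p with hd
  have h1s : (0:ℝ) ≤ 1 - s := by linarith
  have hbd : ‖b - d‖ ≤ 1 := by
    have : b - d = z - c := by rw [hb, hd]; abel
    rw [this]; exact hz
  have hidp : (1-s) • y + s • z - p = (1-s) • a + s • b := by
    rw [ha, hb]; module
  have hidc : (1-s) • y + s • z - c = (1-s) • a + (s • b - d) := by
    rw [ha, hb, hd]; module
  rw [hidp] at hA
  rw [hidc]
  have h1 : ‖(1-s) • a + s • b‖ ≤ (1-s) * ‖a‖ + s * ‖b‖ := by
    calc ‖(1-s) • a + s • b‖ ≤ ‖(1-s) • a‖ + ‖s • b‖ := norm_add_le _ _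
      _ = (1-s) * ‖a‖ + s * ‖b‖ := by
          rw [norm_smul, norm_smul]
          simp [Real.norm_eq_abs, abs_of_nonneg hs0, abs_of_nonneg h1s]
  have hsb : (1+s)/2 < s * ‖b‖ := by nlinarith [norm_nonneg a]
  have hspos : 0 < s := by nlinarith [norm_nonneg b]
  have e1 : ‖s • b - d‖^2 = s^2 * ‖b‖^2 - 2*s*(inner ℝ b d : ℝ) + ‖d‖^2 := by
    rw [norm_sub_sq_real, norm_smul, real_inner_smul_left, Real.norm_eq_abs,
      abs_of_nonneg hs0]
    ring
  have e2 : ‖b - d‖^2 = ‖b‖^2 - 2*(inner ℝ b d : ℝ) + ‖d‖^2 :=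
    norm_sub_sq_real b d
  have e3 : ‖s • b - d‖^2 = s*‖b - d‖^2 + (s^2 - s)*‖b‖^2 + (1-s)*‖d‖^2 := by
    linear_combination e1 - s * e2
  have hsq : ((1+s)/2)^2 < (s*‖b‖)^2 :=
    pow_lt_pow_left₀ hsb (by linarith) two_ne_zero
  have hB2 : (3+s)/4 < s * ‖b‖^2 := by nlinarith [hsq, hspos, hs1]
  have h5 : (1-s)*((3+s)/4) ≤ (1-s)*(s*‖b‖^2) := by
    exact mul_le_mul_of_nonneg_left hB2.le h1s
  have hbd2 : ‖b - d‖^2 ≤ 1 := by nlinarith [norm_nonneg (b-d)]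
  have hd2 : ‖d‖^2 ≤ 1 := by nlinarith [norm_nonneg d]
  have h6 : s*‖b - d‖^2 ≤ s := by nlinarith [mul_le_mul_of_nonneg_left hbd2 hs0]
  have h7 : (1-s)*‖d‖^2 ≤ 1-s := by nlinarith [mul_le_mul_of_nonneg_left hd2 h1s]
  have h3 : ‖s • b - d‖^2 ≤ ((1+s)/2)^2 := by nlinarith [e3, h5, h6, h7]
  have h4 : ‖s • b - d‖ ≤ (1+s)/2 := by
    nlinarith [h3, norm_nonneg (s • b - d), hs0]
  calc ‖(1-s) • a + (s • b - d)‖ ≤ ‖(1-s) • a‖ + ‖s • b - d‖ := norm_add_le _ _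
    _ ≤ (1-s) * ‖a‖ + (1+s)/2 := by
        rw [norm_smul, Real.norm_eq_abs, abs_of_nonneg h1s]; linarith
    _ ≤ 1 := by nlinarith [norm_nonneg a]
/-- Let `C ⊆ ℝ²` be finite, `p ∈ C`, with every point of `C` within
distance 1 of `p`, and let `F = ⋃_{c ∈ C} B̄(c,1)` be the flower of `p`. For any `y` with
`‖y − p‖ < 1/2` and any unit vector `u`, there is exactly one `t ≥ 0` such that `y + t·u`
lies on the topological boundary of `F`. -/
theorem stmt_8 (C : Finset (EuclideanSpace ℝ (Fin 2)))
    (p : EuclideanSpace ℝ (Fin 2)) (hp : p ∈ C)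
    (hC : ∀ c ∈ C, dist c p ≤ 1)
    (y : EuclideanSpace ℝ (Fin 2)) (hy : dist y p < 1 / 2)
    (u : EuclideanSpace ℝ (Fin 2)) (hu : ‖u‖ = 1) :
    ∃! t : ℝ, 0 ≤ t ∧ y + t • u ∈ frontier (⋃ c ∈ C, closedBall c 1) := by
  set F : Set (EuclideanSpace ℝ (Fin 2)) := ⋃ c ∈ C, closedBall c 1 with hF
  have hFclosed : IsClosed F := by
    rw [hF]
    exact Set.Finite.isClosed_biUnion (C.finite_toSet) (fun c _ => Metric.isClosed_closedBall)
  have hsubF : ∀ c ∈ C, closedBall c 1 ⊆ F := by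
    intro c hc
    intro x hx
    rw [hF]
    exact Set.mem_biUnion hc hx
  have hmemF : ∀ x, x ∈ F → ∃ c ∈ C, dist x c ≤ 1 := by
    intro x hx
    rw [hF] at hx
    simp only [Set.mem_iUnion, mem_closedBall] at hx
    obtain ⟨c, hc, hxc⟩ := hx
    exact ⟨c, hc, hxc⟩
  have hyF : y ∈ F := hsubF p hp (by rw [mem_closedBall]; linarith)
  set S : Set ℝ := Set.Ici (0:ℝ) ∩ ((fun t => y + t • u) ⁻¹' F) with hS
  have hmemS : ∀ t : ℝ, t ∈ S ↔ 0 ≤ t ∧ y + t • u ∈ F := by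
    intro t; rfl
  have h0S : (0:ℝ) ∈ S := by
    rw [hmemS]
    refine ⟨le_refl 0, ?_⟩
    simpa using hyF
  have hSbdd : BddAbove S := by
    refine ⟨3, fun t ht => ?_⟩
    rw [hmemS] at ht
    obtain ⟨ht0, htF⟩ := ht
    obtain ⟨c, hc, hxc⟩ := hmemF _ htF
    have h1 : dist (y + t • u) p ≤ 2 := by
      calc dist (y + t • u) p ≤ dist (y + t • u) c + dist c p := dist_triangle _ _ _
        _ ≤ 1 + 1 := add_le_add hxc (hC c hc)
        _ = 2 := by norm_num
    have h2 : dist (y + t • u) y = t := by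
      rw [dist_eq_norm, add_sub_cancel_left, norm_smul, Real.norm_eq_abs,
        abs_of_nonneg ht0, hu, mul_one]
    have := dist_triangle (y + t • u) p y
    rw [dist_comm p y] at this
    linarith [dist_comm (y + t • u) y ▸ h2, h1, hy,
      dist_triangle (y + t • u) y p]
  have hScl : IsClosed S := by
    rw [hS]
    refine IsClosed.inter isClosed_Ici (hFclosed.preimage ?_)
    exact (continuous_const.add ((continuous_id.smul continuous_const)))
  set T := sSup S with hT
  have hTS : T ∈ S := hScl.csSup_mem ⟨0, h0S⟩ hSbdd
  have hT0 : 0 ≤ T := (hmemS T).mp hTS |>.1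
  have hzF : y + T • u ∈ F := ((hmemS T).mp hTS).2
  -- interior claim
  have hint : ∀ t : ℝ, 0 ≤ t → t < T → y + t • u ∈ interior F := by
    intro t ht htT
    have hTpos : 0 < T := lt_of_le_of_lt ht htT
    obtain ⟨c, hcC, hzc⟩ := hmemF _ hzF
    set z := y + T • u with hz
    set s := t / T with hs
    have hs0 : 0 ≤ s := div_nonneg ht hT0
    have hs1 : s < 1 := (div_lt_one hTpos).mpr htT
    have hsT : s * T = t := div_mul_cancel₀ t hTpos.ne'
    have hw : y + t • u = (1-s) • y + s • z := by
      rw [hz]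
      have : (1-s) • y + s • (y + T • u) = y + (s * T) • u := by module
      rw [this, hsT]
    set ρ : ℝ := 1/2 - dist y p with hρ
    have hρ0 : 0 < ρ := by rw [hρ]; linarith
    have h1s : (0:ℝ) < 1 - s := by linarith
    rw [mem_interior_iff_mem_nhds, Metric.mem_nhds_iff]
    refine ⟨(1-s) * ρ, by positivity, ?_⟩
    intro x hx
    rw [mem_ball, hw] at hx
    set w := (1-s) • y + s • z with hwdef
    set y' := y + (1-s)⁻¹ • (x - w) with hy'
    have hxw : x = (1-s) • y' + s • z := by
      have h2 : (1-s) • y' + s • z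
          = ((1-s) • y + s • z) + ((1-s)*(1-s)⁻¹) • (x - w) := by
        rw [hy']; module
      rw [h2, mul_inv_cancel₀ h1s.ne', one_smul, ← hwdef]
      abel
    have hy'y : dist y' y < ρ := by
      rw [hy', dist_eq_norm, add_sub_cancel_left, norm_smul, Real.norm_eq_abs,
        abs_of_nonneg (inv_nonneg.mpr h1s.le)]
      have hxw' : ‖x - w‖ < (1-s) * ρ := by rwa [dist_eq_norm] at hx
      calc (1-s)⁻¹ * ‖x - w‖ < (1-s)⁻¹ * ((1-s) * ρ) := by
            exact mul_lt_mul_of_pos_left hxw' (inv_pos.mpr h1s)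
        _ = ρ := by field_simp
    have hy'p : ‖y' - p‖ ≤ 1/2 := by
      rw [← dist_eq_norm]
      calc dist y' p ≤ dist y' y + dist y p := dist_triangle _ _ _
        _ ≤ ρ + dist y p := by linarith
        _ = 1/2 := by rw [hρ]; ring
    have hstar := star_key p c y' z s hs0 hs1.le hy'p
      (by rw [← dist_eq_norm]; exact hC c hcC)
      (by rw [← dist_eq_norm]; exact hzc)
    rw [← hxw] at hstar
    rcases hstar with h | h
    · exact hsubF p hp (by rw [mem_closedBall, dist_eq_norm]; exact h)
    · exact hsubF c hcC (by rw [mem_closedBall, dist_eq_norm]; exact h)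
  -- assembly
  have hfr : frontier F = F \ interior F := hFclosed.frontier_eq
  refine ⟨T, ⟨hT0, ?_⟩, ?_⟩
  · rw [hfr]
    refine ⟨hzF, ?_⟩
    intro hin
    rw [mem_interior_iff_mem_nhds, Metric.mem_nhds_iff] at hin
    obtain ⟨ε, hε, hball⟩ := hin
    have hmem : T + ε/2 ∈ S := by
      rw [hmemS]
      refine ⟨by linarith, hball ?_⟩
      rw [mem_ball, dist_eq_norm]
      have : y + (T + ε/2) • u - (y + T • u) = (ε/2) • u := by module
      rw [this, norm_smul, Real.norm_eq_abs, abs_of_nonneg (by linarith), hu]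
      linarith
    have := le_csSup hSbdd hmem
    linarith
  · intro t ⟨ht0, htfr⟩
    rw [hfr] at htfr
    obtain ⟨htF, htnint⟩ := htfr
    have htS : t ∈ S := (hmemS t).mpr ⟨ht0, htF⟩
    have htT : t ≤ T := le_csSup hSbdd htS
    rcases lt_or_eq_of_le htT with h | h
    · exact absurd (hint t ht0 h) htnint
    · exact h
end

section
/- There exists δ₀ ∈ (0,1) such that for every δ ∈ (0, δ₀] the following holds. Let A, B ⊆ ℝ² be closed axis-aligned squares of side length δ with 1 − 2√2·δ ≤ dist(A,B) ≤ 2. Let p, q ∈ A with p ≠ q, and suppose there is t ≥ 1 with p + t·(q − p) ∈ B (i.e., q lies between p and B on the line through p and q). Then every x ∈ ℝ² such that ‖x − p‖ ≤ 1 and the closed unit disk B̄(x,1) intersects B satisfies ‖x − q‖ ≤ 1; that is, every unit disk containing p and intersecting B also contains q. -/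
/-- The closed axis-aligned square of side length `δ` centered at `c` in the plane. -/
def axisSquare (c : EuclideanSpace ℝ (Fin 2)) (δ : ℝ) : Set (EuclideanSpace ℝ (Fin 2)) :=
  {z | ∀ i, |z i - c i| ≤ δ / 2}

/-- Diameter bound: two points in an axis square of side `δ` are within `√2·δ`. -/
lemma axisSquare_diam {c : EuclideanSpace ℝ (Fin 2)} {δ : ℝ} (hδ : 0 ≤ δ)
    {z w : EuclideanSpace ℝ (Fin 2)} (hz : z ∈ axisSquare c δ) (hw : w ∈ axisSquare c δ) :
    dist z w ≤ Real.sqrt 2 * δ := by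
  have h : ∀ i, dist (z i) (w i) ≤ δ := by
    intro i
    rw [Real.dist_eq]
    have e : z i - w i = (z i - c i) + (c i - w i) := by ring
    rw [e]
    have h2 := hw i
    rw [abs_sub_comm] at h2
    calc |(z i - c i) + (c i - w i)| ≤ |z i - c i| + |c i - w i| := abs_add_le _ _
      _ ≤ δ / 2 + δ / 2 := add_le_add (hz i) h2
      _ = δ := by ring
  rw [EuclideanSpace.dist_eq]
  have heq : Real.sqrt 2 * δ = Real.sqrt (2 * δ ^ 2) := by
    rw [Real.sqrt_mul (by norm_num : (0:ℝ) ≤ 2), Real.sqrt_sq hδ]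
  rw [heq]
  apply Real.sqrt_le_sqrt
  calc ∑ i, dist (z i) (w i) ^ 2 ≤ ∑ _i : Fin 2, δ ^ 2 :=
        Finset.sum_le_sum fun i _ => pow_le_pow_left₀ dist_nonneg (h i) 2
    _ = 2 * δ ^ 2 := by simp [Fin.sum_univ_two]; try ring

set_option maxHeartbeats 1000000 in
/-- There is `δ₀ ∈ (0,1)` such that for all `0 < δ ≤ δ₀`: if `A, B` are
closed axis-aligned squares of side `δ` with `1 − 2√2·δ ≤ dist(A,B) ≤ 2`, `p, q ∈ A` are
distinct, and `q` lies between `p` and `B` on the line through `p` and `q` (i.e.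
`p + t(q−p) ∈ B` for some `t ≥ 1`), then every unit disk containing `p` and intersecting `B`
also contains `q`. -/
theorem stmt_10 :
    ∃ δ₀ : ℝ, 0 < δ₀ ∧ δ₀ < 1 ∧
      ∀ δ : ℝ, 0 < δ → δ ≤ δ₀ →
      ∀ cA cB : EuclideanSpace ℝ (Fin 2),
      (∀ a ∈ axisSquare cA δ, ∀ b ∈ axisSquare cB δ,
        1 - 2 * Real.sqrt 2 * δ ≤ dist a b) →
      (∃ a ∈ axisSquare cA δ, ∃ b ∈ axisSquare cB δ, dist a b ≤ 2) →
      ∀ p ∈ axisSquare cA δ, ∀ q ∈ axisSquare cA δ, p ≠ q →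
      (∃ t : ℝ, 1 ≤ t ∧ p + t • (q - p) ∈ axisSquare cB δ) →
      ∀ x : EuclideanSpace ℝ (Fin 2), dist p x ≤ 1 →
      (∃ b ∈ axisSquare cB δ, dist b x ≤ 1) →
      dist q x ≤ 1 := by
  refine ⟨1/10, by norm_num, by norm_num, ?_⟩
  intro δ hδ hδ0 cA cB hsep _hclose p hp q hq _hpq ⟨t, ht, hr⟩ x hpx ⟨b, hb, hbx⟩
  set r : EuclideanSpace ℝ (Fin 2) := p + t • (q - p) with hrdef
  set ε : ℝ := Real.sqrt 2 * δ with hεdef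
  have hs2 : (1:ℝ) ≤ Real.sqrt 2 ∧ Real.sqrt 2 ≤ 1.5 := by
    constructor <;> nlinarith [Real.sq_sqrt (by norm_num : (0:ℝ) ≤ 2), Real.sqrt_nonneg 2]
  have hε0 : 0 < ε := by positivity
  have hε : ε ≤ 0.15 := by
    have h1 : Real.sqrt 2 * δ ≤ 1.5 * (1/10) :=
      mul_le_mul hs2.2 hδ0 hδ.le (by norm_num)
    have h2 : ε = Real.sqrt 2 * δ := hεdef
    rw [h2]; linarith
  -- basic quantities
  set u : EuclideanSpace ℝ (Fin 2) := q - p with hudef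
  set v : EuclideanSpace ℝ (Fin 2) := x - p with hvdef
  set n : ℝ := ‖u‖ with hndef
  have hn0 : 0 ≤ n := norm_nonneg _
  have hnε : n ≤ ε := by
    have h1 := axisSquare_diam hδ.le hq hp
    rw [dist_eq_norm] at h1
    exact h1
  have hv1 : ‖v‖ ≤ 1 := by
    have h1 : dist x p ≤ 1 := by rwa [dist_comm]
    rwa [dist_eq_norm] at h1
  -- separation bounds
  have hqr : 1 - 2 * ε ≤ (t - 1) * n := by
    have h1 := hsep q hq r hr
    have h2 : dist q r = (t - 1) * n := by
      have e : r - q = (t - 1) • u := by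
        simp only [hrdef, hudef]; module
      rw [dist_comm, dist_eq_norm, e, norm_smul, Real.norm_eq_abs,
        abs_of_nonneg (by linarith)]
    rw [h2] at h1
    calc 1 - 2 * ε = 1 - 2 * Real.sqrt 2 * δ := by rw [hεdef]; ring
      _ ≤ (t - 1) * n := h1
  have hpr : 1 - 2 * ε ≤ t * n := by
    have h1 := hsep p hp r hr
    have h2 : dist p r = t * n := by
      have e : r - p = t • u := by simp only [hrdef, hudef]; module
      rw [dist_comm, dist_eq_norm, e, norm_smul, Real.norm_eq_abs,
        abs_of_nonneg (by linarith)]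
    rw [h2] at h1
    calc 1 - 2 * ε = 1 - 2 * Real.sqrt 2 * δ := by rw [hεdef]; ring
      _ ≤ t * n := h1
  -- distance from x to r
  have hxr : ‖v - t • u‖ ≤ 1 + ε := by
    have hrx : dist r x ≤ 1 + ε := by
      calc dist r x ≤ dist r b + dist b x := dist_triangle _ _ _
        _ ≤ ε + 1 := add_le_add (axisSquare_diam hδ.le hr hb) hbx
        _ = 1 + ε := by ring
    have e : v - t • u = x - r := by simp only [hvdef, hrdef, hudef]; module
    rw [e]
    rwa [dist_comm, dist_eq_norm] at hrx
  -- inner product expansions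
  set I : ℝ := inner ℝ v u with hIdef
  have hA : ‖v‖ ^ 2 - 2 * (t * I) + t ^ 2 * n ^ 2 ≤ (1 + ε) ^ 2 := by
    have h1 : ‖v - t • u‖ ^ 2 ≤ (1 + ε) ^ 2 :=
      pow_le_pow_left₀ (norm_nonneg _) hxr 2
    rw [norm_sub_sq_real, real_inner_smul_right, norm_smul, Real.norm_eq_abs,
      abs_of_nonneg (by linarith : (0:ℝ) ≤ t), mul_pow] at h1
    rw [hIdef, hndef]
    linarith
  -- rewrite the goal
  have hgoal : dist q x = ‖v - u‖ := by
    rw [dist_eq_norm, ← norm_sub_rev]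
    congr 1
    simp only [hvdef, hudef]
    module
  rw [hgoal]
  have hexp : ‖v - u‖ ^ 2 = ‖v‖ ^ 2 - 2 * I + n ^ 2 := by
    rw [norm_sub_sq_real, hIdef, hndef]
  have hkey : (1 - 2 * ε) * (1 - 2 * ε) ≤ (t * n) * ((t - 1) * n) :=
    mul_le_mul hpr hqr (by linarith) (by positivity)
  have ha1 : ‖v‖ ^ 2 ≤ 1 := by nlinarith [norm_nonneg v]
  have h1 : 0 ≤ (t - 1) * (1 - ‖v‖ ^ 2) :=
    mul_nonneg (by linarith) (by linarith)
  have h2 : 0 ≤ (1 + ε) ^ 2 - (‖v‖ ^ 2 - 2 * (t * I) + t ^ 2 * n ^ 2) := by linarith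
  have h3 : 0 ≤ t * (t - 1) * n ^ 2 - (1 - 2 * ε) ^ 2 := by nlinarith [hkey]
  have h4 : 0 ≤ 1 - 6 * ε + 3 * ε ^ 2 := by nlinarith [sq_nonneg ε]
  have key2 : 0 ≤ t * (1 - (‖v‖ ^ 2 - 2 * I + n ^ 2)) := by nlinarith [h1, h2, h3, h4]
  have hsq : ‖v - u‖ ^ 2 ≤ 1 := by
    rw [hexp]
    nlinarith [key2, ht]
  nlinarith [hsq, norm_nonneg (v - u)]
end

section
/- Let Δ ≥ 1, let P₀, …, P_Δ be finite subsets of ℝ², let j ∈ {0, …, Δ−1}, and let μ ∈ (0,1). Assume that no two points p, p' ∈ P₀ ∪ ⋯ ∪ P_Δ satisfy y(p) − y(p') = 1. Then there exist functions φ : P₀ → ℝ and ψ : P_Δ → ℝ such that for every (p₀, p_Δ) ∈ P₀ × P_Δ the following are equivalent: (a) there exist p₁ ∈ P₁, …, p_{Δ−1} ∈ P_{Δ−1} such that ‖p_i − p_{i+1}‖∞ ≤ 1 for all 0 ≤ i ≤ Δ−1, p_j ∈ (μ,1)×(0,1), and p_{j+1} ∈ ((0,μ) ∪ (1,1+μ))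 × (−1,1); (b) φ(p₀) < ψ(p_Δ). -/
noncomputable def minY (F : Finset (ℝ × ℝ)) (d : ℝ) : ℝ :=
  if h : F.Nonempty then (F.image Prod.snd).min' (h.image _) else d

noncomputable def maxY (F : Finset (ℝ × ℝ)) (d : ℝ) : ℝ :=
  if h : F.Nonempty then (F.image Prod.snd).max' (h.image _) else d

lemma minY_le {F : Finset (ℝ × ℝ)} {d : ℝ} {q : ℝ × ℝ} (hq : q ∈ F) : minY F d ≤ q.2 := by
  rw [minY, dif_pos ⟨q, hq⟩]
  exact Finset.min'_le _ _ (Finset.mem_image_of_mem _ hq)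

lemma le_maxY {F : Finset (ℝ × ℝ)} {d : ℝ} {q : ℝ × ℝ} (hq : q ∈ F) : q.2 ≤ maxY F d := by
  rw [maxY, dif_pos ⟨q, hq⟩]
  exact Finset.le_max' _ _ (Finset.mem_image_of_mem _ hq)

lemma exists_minY {F : Finset (ℝ × ℝ)} (d : ℝ) (h : F.Nonempty) :
    ∃ q ∈ F, minY F d = q.2 := by
  rw [minY, dif_pos h]
  have hm := Finset.min'_mem (F.image Prod.snd) (h.image _)
  rw [Finset.mem_image] at hm
  obtain ⟨q, hq, hq2⟩ := hm
  exact ⟨q, hq, hq2.symm⟩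

lemma exists_maxY {F : Finset (ℝ × ℝ)} (d : ℝ) (h : F.Nonempty) :
    ∃ q ∈ F, maxY F d = q.2 := by
  rw [maxY, dif_pos h]
  have hm := Finset.max'_mem (F.image Prod.snd) (h.image _)
  rw [Finset.mem_image] at hm
  obtain ⟨q, hq, hq2⟩ := hm
  exact ⟨q, hq, hq2.symm⟩

lemma minY_empty {F : Finset (ℝ × ℝ)} {d : ℝ} (h : ¬ F.Nonempty) : minY F d = d := dif_neg h

lemma maxY_empty {F : Finset (ℝ × ℝ)} {d : ℝ} (h : ¬ F.Nonempty) : maxY F d = d := dif_neg h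

/-- A partial chain from `p₀` to a point `q` in the first gadget box. -/
def FrontP (P : ℕ → Finset (ℝ × ℝ)) (j : ℕ) (μ : ℝ) (p₀ q : ℝ × ℝ) : Prop :=
  q ∈ Set.Ioo μ 1 ×ˢ Set.Ioo (0:ℝ) 1 ∧
  ∃ p : ℕ → ℝ × ℝ, p 0 = p₀ ∧ p j = q ∧ (∀ i, 0 < i → i ≤ j → p i ∈ P i) ∧
    (∀ i < j, dist (p i) (p (i+1)) ≤ 1)

/-- A partial chain from a point `q` in the second gadget box to `pΔ`. -/
def BackP (P : ℕ → Finset (ℝ × ℝ)) (j Δ : ℕ) (μ : ℝ) (pΔ q : ℝ × ℝ) : Prop :=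
  q ∈ (Set.Ioo (0:ℝ) μ ∪ Set.Ioo 1 (1+μ)) ×ˢ Set.Ioo (-1:ℝ) 1 ∧
  ∃ p : ℕ → ℝ × ℝ, p Δ = pΔ ∧ p (j+1) = q ∧ (∀ i, j+1 ≤ i → i < Δ → p i ∈ P i) ∧
    (∀ i, j < i → i < Δ → dist (p i) (p (i+1)) ≤ 1)

/-- (Lemma `unitsq1` of the paper.) Points of `ℝ²` are pairs `(x, y)`,
and `dist` on `ℝ × ℝ` is the max-norm distance, so `dist p q ≤ 1` iff the closed axis-aligned
unit squares centered at `p, q` intersect. Given finite sets `P₀, …, P_Δ`, `j < Δ`, and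
`μ ∈ (0,1)`, assuming no two `y`-coordinates differ by exactly 1, there are `φ : P₀ → ℝ` and
`ψ : P_Δ → ℝ` such that for all `(p₀, p_Δ) ∈ P₀ × P_Δ`: a chain `p₁, …, p_{Δ−1}` with
consecutive squares intersecting, `p_j ∈ (μ,1)×(0,1)` and
`p_{j+1} ∈ ((0,μ) ∪ (1,1+μ)) × (−1,1)` exists iff `φ(p₀) < ψ(p_Δ)`. -/
theorem stmt_11 (Δ : ℕ) (hΔ : 1 ≤ Δ) (P : ℕ → Finset (ℝ × ℝ))
    (j : ℕ) (hj : j < Δ) (μ : ℝ) (hμ : μ ∈ Set.Ioo (0 : ℝ) 1)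
    (hgen : ∀ i ≤ Δ, ∀ i' ≤ Δ, ∀ p ∈ P i, ∀ p' ∈ P i', p.2 - p'.2 ≠ 1) :
    ∃ φ ψ : ℝ × ℝ → ℝ, ∀ p₀ ∈ P 0, ∀ pΔ ∈ P Δ,
      ((∃ p : ℕ → ℝ × ℝ, p 0 = p₀ ∧ p Δ = pΔ ∧
          (∀ i, 0 < i → i < Δ → p i ∈ P i) ∧
          (∀ i < Δ, dist (p i) (p (i + 1)) ≤ 1) ∧
          p j ∈ Set.Ioo μ 1 ×ˢ Set.Ioo (0 : ℝ) 1 ∧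
          p (j + 1) ∈ (Set.Ioo (0 : ℝ) μ ∪ Set.Ioo 1 (1 + μ)) ×ˢ Set.Ioo (-1 : ℝ) 1) ↔
        φ p₀ < ψ pΔ) := by
  classical
  obtain ⟨hμ0, hμ1⟩ := hμ
  -- Geometric key fact: inside the gadget, max-norm closeness is a pure y-threshold.
  have gl : ∀ q ∈ Set.Ioo μ 1 ×ˢ Set.Ioo (0:ℝ) 1,
      ∀ q' ∈ (Set.Ioo (0:ℝ) μ ∪ Set.Ioo 1 (1+μ)) ×ˢ Set.Ioo (-1:ℝ) 1,
      (dist q q' ≤ 1 ↔ q.2 - q'.2 ≤ 1) := by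
    rintro ⟨x, y⟩ hq ⟨x', y'⟩ hq'
    obtain ⟨⟨hx1, hx2⟩, hy1, hy2⟩ : (μ < x ∧ x < 1) ∧ 0 < y ∧ y < 1 := by
      simpa [Set.mem_prod] using hq
    have hq'2 : ((0 < x' ∧ x' < μ) ∧ -1 < y' ∧ y' < 1) ∨
        ((1 < x' ∧ x' < 1 + μ) ∧ -1 < y' ∧ y' < 1) := by
      simpa [Set.mem_prod] using hq'
    rw [Prod.dist_eq, Real.dist_eq, Real.dist_eq, max_le_iff, abs_le, abs_le]
    rcases hq'2 with ⟨⟨h1, h2⟩, hy1', hy2'⟩ | ⟨⟨h1, h2⟩, hy1', hy2'⟩ <;>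
      exact ⟨fun h => h.2.2, fun h => ⟨⟨by linarith, by linarith⟩, by linarith, h⟩⟩
  have hjΔ : j + 1 ≤ Δ := hj
  -- No y-difference equal to 1 among gadget candidates.
  have hne : ∀ q ∈ P j ∪ P 0, ∀ q' ∈ P (j+1) ∪ P Δ, q.2 - q'.2 ≠ 1 := by
    intro q hq q' hq'
    rw [Finset.mem_union] at hq hq'
    rcases hq with h | h <;> rcases hq' with h' | h'
    · exact hgen j hj.le (j+1) hjΔ q h q' h'
    · exact hgen j hj.le Δ le_rfl q h q' h'
    · exact hgen 0 (Nat.zero_le Δ) (j+1) hjΔ q h q' h'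
    · exact hgen 0 (Nat.zero_le Δ) Δ le_rfl q h q' h'
  set C : ℝ := ∑ q ∈ (P j ∪ P 0) ∪ (P (j+1) ∪ P Δ), |q.2| with hC
  have hC0 : 0 ≤ C := Finset.sum_nonneg fun _ _ => abs_nonneg _
  have hCS : ∀ q ∈ P j ∪ P 0, |q.2| ≤ C := fun q hq =>
    Finset.single_le_sum (f := fun q => |q.2|) (fun _ _ => abs_nonneg _)
      (Finset.mem_union_left _ hq)
  have hCT : ∀ q ∈ P (j+1) ∪ P Δ, |q.2| ≤ C := fun q hq =>
    Finset.single_le_sum (f := fun q => |q.2|) (fun _ _ => abs_nonneg _)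
      (Finset.mem_union_right _ hq)
  refine ⟨fun p₀ => minY ((P j ∪ P 0).filter (FrontP P j μ p₀)) (C + 2),
          fun pΔ => maxY ((P (j+1) ∪ P Δ).filter (BackP P j Δ μ pΔ)) (-(C+3)) + 1, ?_⟩
  intro p₀ hp₀ pΔ hpΔ
  beta_reduce
  constructor
  · rintro ⟨p, h0, hDp, hint, hdist, hBj, hBj1⟩
    have hqS : p j ∈ P j ∪ P 0 := by
      rcases Nat.eq_zero_or_pos j with h | h
      · subst h; rw [h0]; exact Finset.mem_union_right _ hp₀
      · exact Finset.mem_union_left _ (hint j h hj)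
    have hq'T : p (j+1) ∈ P (j+1) ∪ P Δ := by
      rcases eq_or_lt_of_le hjΔ with h | h
      · rw [h, hDp]; exact Finset.mem_union_right _ hpΔ
      · exact Finset.mem_union_left _ (hint (j+1) (Nat.succ_pos j) h)
    have hF1 : FrontP P j μ p₀ (p j) :=
      ⟨hBj, p, h0, rfl, fun i hi1 hi2 => hint i hi1 (lt_of_le_of_lt hi2 hj),
        fun i hi => hdist i (hi.trans hj)⟩
    have hF2 : BackP P j Δ μ pΔ (p (j+1)) :=
      ⟨hBj1, p, hDp, rfl,
        fun i hi1 hi2 => hint i (Nat.lt_of_lt_of_le (Nat.succ_pos j) hi1) hi2,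
        fun i _ hi2 => hdist i hi2⟩
    have h1 : minY ((P j ∪ P 0).filter (FrontP P j μ p₀)) (C + 2) ≤ (p j).2 :=
      minY_le (Finset.mem_filter.2 ⟨hqS, hF1⟩)
    have h2 : (p (j+1)).2 ≤ maxY ((P (j+1) ∪ P Δ).filter (BackP P j Δ μ pΔ)) (-(C+3)) :=
      le_maxY (Finset.mem_filter.2 ⟨hq'T, hF2⟩)
    have h3 : (p j).2 - (p (j+1)).2 ≤ 1 := (gl _ hBj _ hBj1).1 (hdist j hj)
    have h4 : (p j).2 - (p (j+1)).2 ≠ 1 := hne _ hqS _ hq'T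
    have h5 : (p j).2 - (p (j+1)).2 < 1 := lt_of_le_of_ne h3 h4
    linarith
  · intro h
    have hFn1 : ((P j ∪ P 0).filter (FrontP P j μ p₀)).Nonempty := by
      by_contra hno
      rw [minY_empty hno] at h
      rcases Finset.eq_empty_or_nonempty ((P (j+1) ∪ P Δ).filter (BackP P j Δ μ pΔ))
        with he | hne2
      · rw [maxY_empty (by simp [he])] at h; linarith
      · obtain ⟨q', hq', heq⟩ := exists_maxY (-(C+3)) hne2
        rw [heq] at h
        have := hCT q' (Finset.mem_filter.1 hq').1
        have := abs_le.1 this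
        linarith [this.2]
    have hFn2 : ((P (j+1) ∪ P Δ).filter (BackP P j Δ μ pΔ)).Nonempty := by
      by_contra hno
      rw [maxY_empty hno] at h
      obtain ⟨q, hq, heq⟩ := exists_minY (C + 2) hFn1
      rw [heq] at h
      have := hCS q (Finset.mem_filter.1 hq).1
      have := abs_le.1 this
      linarith [this.1]
    obtain ⟨q, hq, hφeq⟩ := exists_minY (C + 2) hFn1
    obtain ⟨q', hq', hψeq⟩ := exists_maxY (-(C+3)) hFn2
    rw [hφeq, hψeq] at h
    obtain ⟨hqS, hB1q, pf, hpf0, hpfj, hpfint, hpfdist⟩ := Finset.mem_filter.1 hq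
    obtain ⟨hq'T, hB2q, pb, hpbD, hpbj, hpbint, hpbdist⟩ := Finset.mem_filter.1 hq'
    have hdqq : dist q q' ≤ 1 := (gl _ hB1q _ hB2q).2 (by linarith)
    refine ⟨fun i => if i ≤ j then pf i else pb i, ?_, ?_, ?_, ?_, ?_, ?_⟩
    · beta_reduce; rw [if_pos (Nat.zero_le j)]; exact hpf0
    · beta_reduce; rw [if_neg (by omega : ¬ Δ ≤ j)]; exact hpbD
    · intro i hi0 hiΔ
      beta_reduce
      by_cases hij : i ≤ j
      · rw [if_pos hij]; exact hpfint i hi0 hij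
      · rw [if_neg hij]; exact hpbint i (by omega) hiΔ
    · intro i hiΔ
      beta_reduce
      rcases lt_trichotomy i j with hlt | heq | hgt
      · rw [if_pos hlt.le, if_pos (by omega : i + 1 ≤ j)]
        exact hpfdist i hlt
      · subst heq
        rw [if_pos le_rfl, if_neg (by omega : ¬ i + 1 ≤ i), hpfj, hpbj]
        exact hdqq
      · rw [if_neg (by omega : ¬ i ≤ j), if_neg (by omega : ¬ i + 1 ≤ j)]
        exact hpbdist i hgt hiΔ
    · beta_reduce; rw [if_pos le_rfl, hpfj]; exact hB1q
    · beta_reduce; rw [if_neg (by omega : ¬ j + 1 ≤ j), hpbj]; exact hB2q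
end

section
/- Let Δ ≥ 1, let P₀, …, P_Δ be finite subsets of ℝ² with P₀ ⊆ (0,1)², and let μ ∈ (0,1). Let P = P₀ ∪ ⋯ ∪ P_Δ and assume: (i) no point of P has an integer x- or y-coordinate; (ii) fract(x(p)) ≠ μ for every p ∈ P; (iii) no two points p, p' ∈ P satisfy y(p) − y(p') = 1. Then there exist D ∈ ℕ with D ≤ 4·Δ·(2Δ+1)² and functions φ : P₀ → ℝ^D, ψ : P_Δ → ℝ^D such that for every (p₀, p_Δ) ∈ P₀ × P_Δ the following are equivalent: (a) there exist p₁ ∈ P₁, …, p_{Δ−1} ∈ P_{Δ−1} and j ∈ {0, …, Δ−1} such that ‖p_i − p_{i+1}‖∞ ≤ 1 for all 0 ≤ i ≤ Δ−1, and either fract(x(p_j)) > μ and fract(x(p_{j+1})) < μ, or fract(x(p_j)) < μ and fract(x(p_{j+1})) > μ; (b) φ(p₀) does not dominate ψ(p_Δ), i.e., it is not the case that φ(p₀)_m ≥ ψ(p_Δ)_m for all coordinates m. -/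
namespace Stmt12

open Finset

noncomputable section

def Reach (P : ℕ → Finset (ℝ × ℝ)) (j : ℕ) (a u : ℝ × ℝ) : Prop :=
  ∃ q : ℕ → ℝ × ℝ, q 0 = a ∧ q j = u ∧ (∀ i, 0 < i → i ≤ j → q i ∈ P i) ∧
    ∀ i < j, dist (q i) (q (i + 1)) ≤ 1

def Bck (Δ : ℕ) (P : ℕ → Finset (ℝ × ℝ)) (t : ℕ) (b v : ℝ × ℝ) : Prop :=
  ∃ q : ℕ → ℝ × ℝ, q t = v ∧ q Δ = b ∧ (∀ i, t ≤ i → i < Δ → q i ∈ P i) ∧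
    ∀ i, t ≤ i → i < Δ → dist (q i) (q (i + 1)) ≤ 1

def QU (P : ℕ → Finset (ℝ × ℝ)) (μ : ℝ) (j : ℕ) (s : Bool) (k l : ℤ) (a u : ℝ × ℝ) : Prop :=
  Reach P j a u ∧ ⌊u.1⌋ = k ∧ ⌊u.2⌋ = l ∧
    (if s then μ < Int.fract u.1 else Int.fract u.1 < μ)

def QV (Δ : ℕ) (P : ℕ → Finset (ℝ × ℝ)) (μ : ℝ) (j : ℕ) (s : Bool) (k l : ℤ) (pc : Bool)
    (b v : ℝ × ℝ) : Prop :=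
  Bck Δ P (j + 1) b v ∧
    (if s then Int.fract v.1 < μ ∧ (⌊v.1⌋ = k ∨ ⌊v.1⌋ = k + 1)
      else μ < Int.fract v.1 ∧ (⌊v.1⌋ = k - 1 ∨ ⌊v.1⌋ = k)) ∧
    (if pc then ⌊v.2⌋ = l ∨ ⌊v.2⌋ = l + 1 else ⌊v.2⌋ = l - 1)

open Classical in
def UF (P : ℕ → Finset (ℝ × ℝ)) (μ : ℝ) (j : ℕ) (s : Bool) (k l : ℤ) (a : ℝ × ℝ) :
    Finset ℝ :=
  ((if j = 0 then {a} else P j).filter (fun u => QU P μ j s k l a u)).image (fun u => u.2)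

open Classical in
def VF (Δ : ℕ) (P : ℕ → Finset (ℝ × ℝ)) (μ : ℝ) (j : ℕ) (s : Bool) (k l : ℤ) (pc : Bool)
    (b : ℝ × ℝ) : Finset ℝ :=
  ((if j + 1 = Δ then {b} else P (j + 1)).filter (fun v => QV Δ P μ j s k l pc b v)).image
    (fun v => if pc then v.2 - 1 else v.2 + 1)

def phiF (Δ : ℕ) (P : ℕ → Finset (ℝ × ℝ)) (μ : ℝ) (j : ℕ) (s pc : Bool) (k l : ℤ)
    (a : ℝ × ℝ) : ℝ :=
  if pc then -((insert (-((Δ : ℝ) + 5)) (UF P μ j s k l a)).max' (insert_nonempty _ _))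
  else (insert ((Δ : ℝ) + 5) (UF P μ j s k l a)).min' (insert_nonempty _ _)

def psiF (Δ : ℕ) (P : ℕ → Finset (ℝ × ℝ)) (μ : ℝ) (j : ℕ) (s pc : Bool) (k l : ℤ)
    (b : ℝ × ℝ) : ℝ :=
  if pc then -((insert ((Δ : ℝ) + 5) (VF Δ P μ j s k l true b)).min' (insert_nonempty _ _))
  else (insert (-((Δ : ℝ) + 5)) (VF Δ P μ j s k l false b)).max' (insert_nonempty _ _)

lemma chain_dist (p : ℕ → ℝ × ℝ) : ∀ n : ℕ, (∀ i < n, dist (p i) (p (i + 1)) ≤ 1) →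
    dist (p 0) (p n) ≤ n := by
  intro n
  induction n with
  | zero => intro _; simp
  | succ n ih =>
    intro h
    have h1 := ih (fun i hi => h i (by omega))
    have h2 := h n (by omega)
    have h3 := dist_triangle (p 0) (p n) (p (n + 1))
    push_cast
    linarith

lemma assemble {Δ : ℕ} {P : ℕ → Finset (ℝ × ℝ)} {j : ℕ} (hj : j < Δ) {a b u v : ℝ × ℝ}
    (hr : Reach P j a u) (hb : Bck Δ P (j + 1) b v) (hd : dist u v ≤ 1) :
    ∃ p : ℕ → ℝ × ℝ, p 0 = a ∧ p Δ = b ∧ p j = u ∧ p (j + 1) = v ∧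
      (∀ i, 0 < i → i < Δ → p i ∈ P i) ∧ ∀ i < Δ, dist (p i) (p (i + 1)) ≤ 1 := by
  obtain ⟨q1, hq10, hq1j, hq1m, hq1d⟩ := hr
  obtain ⟨q2, hq2t, hq2D, hq2m, hq2d⟩ := hb
  refine ⟨fun i => if i ≤ j then q1 i else q2 i, ?_, ?_, ?_, ?_, ?_, ?_⟩
  · simpa using hq10
  · dsimp only; rw [if_neg (by omega)]; exact hq2D
  · simpa using hq1j
  · dsimp only; rw [if_neg (by omega)]; exact hq2t
  · intro i hi hiΔ
    dsimp only
    by_cases h : i ≤ j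
    · rw [if_pos h]; exact hq1m i hi h
    · rw [if_neg h]; exact hq2m i (by omega) hiΔ
  · intro i hiΔ
    dsimp only
    by_cases h1 : i + 1 ≤ j
    · rw [if_pos (by omega), if_pos h1]; exact hq1d i (by omega)
    · by_cases h2 : i ≤ j
      · have hij : i = j := by omega
        subst hij
        rw [if_pos h2, if_neg h1, hq1j, hq2t]; exact hd
      · rw [if_neg h2, if_neg h1]; exact hq2d i (by omega) hiΔ

lemma xcompat (μ : ℝ) (s : Bool) (k : ℤ) (x y : ℝ) (hx : ⌊x⌋ = k)
    (hfx : if s then μ < Int.fract x else Int.fract x < μ)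
    (hfy : if s then Int.fract y < μ else μ < Int.fract y) :
    (|x - y| ≤ 1 ↔ (if s then ⌊y⌋ = k ∨ ⌊y⌋ = k + 1 else ⌊y⌋ = k - 1 ∨ ⌊y⌋ = k)) := by
  have h1 : (k : ℝ) + Int.fract x = x := by rw [← hx]; exact Int.floor_add_fract x
  have h2 : (⌊y⌋ : ℝ) + Int.fract y = y := Int.floor_add_fract y
  have f1 := Int.fract_nonneg x
  have f2 := Int.fract_lt_one x
  have f3 := Int.fract_nonneg y
  have f4 := Int.fract_lt_one y
  cases s <;> simp only [if_true, if_false, Bool.false_eq_true, reduceIte] at hfx hfy ⊢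
  · constructor
    · intro h
      rcases abs_le.mp h with ⟨hl, hr⟩
      by_contra hc
      push_neg at hc
      have hc' : ⌊y⌋ ≤ k - 2 ∨ k + 1 ≤ ⌊y⌋ := by omega
      rcases hc' with h' | h'
      · have hcast : (⌊y⌋ : ℝ) ≤ (k : ℝ) - 2 := by exact_mod_cast h'
        linarith
      · have hcast : (k : ℝ) + 1 ≤ (⌊y⌋ : ℝ) := by exact_mod_cast h'
        linarith
    · rintro (h' | h')
      · have hcast : (⌊y⌋ : ℝ) = (k : ℝ) - 1 := by exact_mod_cast h'
        rw [abs_le]; constructor <;> linarith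
      · have hcast : (⌊y⌋ : ℝ) = (k : ℝ) := by exact_mod_cast h'
        rw [abs_le]; constructor <;> linarith
  · constructor
    · intro h
      rcases abs_le.mp h with ⟨hl, hr⟩
      by_contra hc
      push_neg at hc
      have hc' : ⌊y⌋ ≤ k - 1 ∨ k + 2 ≤ ⌊y⌋ := by omega
      rcases hc' with h' | h'
      · have hcast : (⌊y⌋ : ℝ) ≤ (k : ℝ) - 1 := by exact_mod_cast h'
        linarith
      · have hcast : (k : ℝ) + 2 ≤ (⌊y⌋ : ℝ) := by exact_mod_cast h'
        linarith
    · rintro (h' | h')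
      · have hcast : (⌊y⌋ : ℝ) = (k : ℝ) := by exact_mod_cast h'
        rw [abs_le]; constructor <;> linarith
      · have hcast : (⌊y⌋ : ℝ) = (k : ℝ) + 1 := by exact_mod_cast h'
        rw [abs_le]; constructor <;> linarith

lemma yfloor (l : ℤ) (x y : ℝ) (hx : ⌊x⌋ = l) (h : |x - y| ≤ 1) (h1 : x - y ≠ 1)
    (h2 : y - x ≠ 1) : (⌊y⌋ = l ∨ ⌊y⌋ = l + 1 ∨ ⌊y⌋ = l - 1) ∧ y - 1 < x ∧ x - 1 < y := by
  rcases abs_le.mp h with ⟨hl, hr⟩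
  have hr' : x - y < 1 := lt_of_le_of_ne hr h1
  have hl' : y - x < 1 := lt_of_le_of_ne (by linarith) h2
  have hx1 : (l : ℝ) ≤ x := by rw [← hx]; exact Int.floor_le x
  have hx2 : x < l + 1 := by rw [← hx]; exact_mod_cast Int.lt_floor_add_one x
  have hm1 : l - 1 ≤ ⌊y⌋ := Int.le_floor.mpr (by push_cast; linarith)
  have hm2 : ⌊y⌋ < l + 2 := Int.floor_lt.mpr (by push_cast; linarith)
  exact ⟨by omega, by linarith, by linarith⟩

lemma ybwd (l : ℤ) (pc : Bool) (x y : ℝ) (hx : ⌊x⌋ = l)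
    (hrow : if pc then ⌊y⌋ = l ∨ ⌊y⌋ = l + 1 else ⌊y⌋ = l - 1)
    (hcl : if pc then y - 1 < x else x - 1 < y) : |x - y| ≤ 1 := by
  have hx1 : (l : ℝ) ≤ x := by rw [← hx]; exact Int.floor_le x
  have hx2 : x < l + 1 := by rw [← hx]; exact_mod_cast Int.lt_floor_add_one x
  have hy1 : (⌊y⌋ : ℝ) ≤ y := Int.floor_le y
  have hy2 : y < ⌊y⌋ + 1 := Int.lt_floor_add_one y
  rw [abs_le]
  cases pc <;> simp only [if_true, if_false, Bool.false_eq_true, reduceIte] at hrow hcl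
  · have hcast : (⌊y⌋ : ℝ) = (l : ℝ) - 1 := by exact_mod_cast hrow
    constructor <;> linarith
  · rcases hrow with h' | h'
    · have hcast : (⌊y⌋ : ℝ) = (l : ℝ) := by exact_mod_cast h'
      constructor <;> linarith
    · have hcast : (⌊y⌋ : ℝ) = (l : ℝ) + 1 := by exact_mod_cast h'
      constructor <;> linarith

lemma dist_pair {u v : ℝ × ℝ} : dist u v ≤ 1 ↔ |u.1 - v.1| ≤ 1 ∧ |u.2 - v.2| ≤ 1 := by
  rw [Prod.dist_eq, max_le_iff, Real.dist_eq, Real.dist_eq]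

open Classical in
lemma QU_base {P : ℕ → Finset (ℝ × ℝ)} {μ : ℝ} {j : ℕ} {s : Bool} {k l : ℤ} {a u : ℝ × ℝ}
    (hq : QU P μ j s k l a u) : u ∈ (if j = 0 then ({a} : Finset (ℝ × ℝ)) else P j) := by
  obtain ⟨⟨q, h0, hjq, hmem, _⟩, _⟩ := hq
  by_cases h : j = 0
  · subst h
    simp only [if_true, mem_singleton, reduceIte]
    rw [← hjq, h0]
  · rw [if_neg h]
    rw [← hjq]
    exact hmem j (Nat.pos_of_ne_zero h) le_rfl

open Classical in
lemma QV_base {Δ : ℕ} {P : ℕ → Finset (ℝ × ℝ)} {μ : ℝ} {j : ℕ} {s : Bool} {k l : ℤ}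
    {pc : Bool} {b v : ℝ × ℝ} (hj : j < Δ) (hq : QV Δ P μ j s k l pc b v) :
    v ∈ (if j + 1 = Δ then ({b} : Finset (ℝ × ℝ)) else P (j + 1)) := by
  obtain ⟨⟨q, ht, hD, hmem, _⟩, _⟩ := hq
  by_cases h : j + 1 = Δ
  · rw [if_pos h, mem_singleton, ← ht, h, hD]
  · rw [if_neg h, ← ht]
    exact hmem (j + 1) le_rfl (by omega)

open Classical in
lemma mem_UF_of {P : ℕ → Finset (ℝ × ℝ)} {μ : ℝ} {j : ℕ} {s : Bool} {k l : ℤ} {a u : ℝ × ℝ}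
    (hq : QU P μ j s k l a u) : u.2 ∈ UF P μ j s k l a :=
  mem_image_of_mem _ (mem_filter.mpr ⟨QU_base hq, hq⟩)

open Classical in
lemma mem_VF_of {Δ : ℕ} {P : ℕ → Finset (ℝ × ℝ)} {μ : ℝ} {j : ℕ} {s : Bool} {k l : ℤ}
    {pc : Bool} {b v : ℝ × ℝ} (hj : j < Δ) (hq : QV Δ P μ j s k l pc b v) :
    (if pc then v.2 - 1 else v.2 + 1) ∈ VF Δ P μ j s k l pc b :=
  mem_image_of_mem _ (mem_filter.mpr ⟨QV_base hj hq, hq⟩)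

open Classical in
lemma exists_of_mem_UF {P : ℕ → Finset (ℝ × ℝ)} {μ : ℝ} {j : ℕ} {s : Bool} {k l : ℤ}
    {a : ℝ × ℝ} {z : ℝ} (hz : z ∈ UF P μ j s k l a) :
    ∃ u : ℝ × ℝ, QU P μ j s k l a u ∧ u.2 = z := by
  simp only [UF, mem_image, mem_filter] at hz
  obtain ⟨u, ⟨_, hq⟩, h⟩ := hz
  exact ⟨u, hq, h⟩

open Classical in
lemma exists_of_mem_VF {Δ : ℕ} {P : ℕ → Finset (ℝ × ℝ)} {μ : ℝ} {j : ℕ} {s : Bool}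
    {k l : ℤ} {pc : Bool} {b : ℝ × ℝ} {z : ℝ} (hz : z ∈ VF Δ P μ j s k l pc b) :
    ∃ v : ℝ × ℝ, QV Δ P μ j s k l pc b v ∧ (if pc then v.2 - 1 else v.2 + 1) = z := by
  simp only [VF, mem_image, mem_filter] at hz
  obtain ⟨v, ⟨_, hq⟩, h⟩ := hz
  exact ⟨v, hq, h⟩

lemma UF_bounds {P : ℕ → Finset (ℝ × ℝ)} {μ : ℝ} {j : ℕ} {s : Bool} {k l : ℤ}
    {a : ℝ × ℝ} {z : ℝ} (hz : z ∈ UF P μ j s k l a) : (l : ℝ) ≤ z ∧ z < (l : ℝ) + 1 := by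
  obtain ⟨u, ⟨_, _, hfl, _⟩, hval⟩ := exists_of_mem_UF hz
  subst hval
  constructor
  · rw [← hfl]; exact Int.floor_le _
  · rw [← hfl]; exact Int.lt_floor_add_one _

lemma VF_bounds {Δ : ℕ} {P : ℕ → Finset (ℝ × ℝ)} {μ : ℝ} {j : ℕ} {s : Bool} {k l : ℤ}
    {pc : Bool} {b : ℝ × ℝ} {z : ℝ} (hz : z ∈ VF Δ P μ j s k l pc b) :
    (l : ℝ) - 2 ≤ z ∧ z < (l : ℝ) + 2 := by
  obtain ⟨v, ⟨_, _, hrow⟩, hval⟩ := exists_of_mem_VF hz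
  have hv1 : (⌊v.2⌋ : ℝ) ≤ v.2 := Int.floor_le _
  have hv2 : v.2 < ⌊v.2⌋ + 1 := Int.lt_floor_add_one _
  subst hval
  cases pc <;>
    simp only [if_true, if_false, Bool.false_eq_true, reduceIte] at hrow ⊢
  · have hcast : (⌊v.2⌋ : ℝ) = (l : ℝ) - 1 := by exact_mod_cast hrow
    constructor <;> linarith
  · rcases hrow with h' | h'
    · have hcast : (⌊v.2⌋ : ℝ) = (l : ℝ) := by exact_mod_cast h'
      constructor <;> linarith
    · have hcast : (⌊v.2⌋ : ℝ) = (l : ℝ) + 1 := by exact_mod_cast h'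
      constructor <;> linarith

open Classical in
lemma piece_lt_true {Δ : ℕ} {P : ℕ → Finset (ℝ × ℝ)} {μ : ℝ} {j : ℕ} {s : Bool} {k l : ℤ}
    {a b u v : ℝ × ℝ} (hj : j < Δ) (hQU : QU P μ j s k l a u)
    (hQV : QV Δ P μ j s k l true b v) (hyy : v.2 - 1 < u.2) :
    phiF Δ P μ j s true k l a < psiF Δ P μ j s true k l b := by
  have h1 : u.2 ∈ UF P μ j s k l a := mem_UF_of hQU
  have h2 : v.2 - 1 ∈ VF Δ P μ j s k l true b := by
    have := mem_VF_of hj hQV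
    simpa using this
  simp only [phiF, psiF, if_true, reduceIte]
  have hA := Finset.le_max' (insert (-((Δ:ℝ) + 5)) (UF P μ j s k l a)) u.2
    (mem_insert_of_mem h1)
  have hB := Finset.min'_le (insert ((Δ:ℝ) + 5) (VF Δ P μ j s k l true b)) (v.2 - 1)
    (mem_insert_of_mem h2)
  have hmm := Finset.max'_mem (insert (-((Δ:ℝ) + 5)) (UF P μ j s k l a))
    (insert_nonempty _ _)
  linarith [hA, hB]

open Classical in
lemma piece_lt_false {Δ : ℕ} {P : ℕ → Finset (ℝ × ℝ)} {μ : ℝ} {j : ℕ} {s : Bool} {k l : ℤ}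
    {a b u v : ℝ × ℝ} (hj : j < Δ) (hQU : QU P μ j s k l a u)
    (hQV : QV Δ P μ j s k l false b v) (hyy : u.2 - 1 < v.2) :
    phiF Δ P μ j s false k l a < psiF Δ P μ j s false k l b := by
  have h1 : u.2 ∈ UF P μ j s k l a := mem_UF_of hQU
  have h2 : v.2 + 1 ∈ VF Δ P μ j s k l false b := by
    have := mem_VF_of hj hQV
    simpa using this
  simp only [phiF, psiF, if_false, Bool.false_eq_true, reduceIte]
  have hA := Finset.min'_le (insert ((Δ:ℝ) + 5) (UF P μ j s k l a)) u.2
    (mem_insert_of_mem h1)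
  have hB := Finset.le_max' (insert (-((Δ:ℝ) + 5)) (VF Δ P μ j s k l false b)) (v.2 + 1)
    (mem_insert_of_mem h2)
  linarith

open Classical in
lemma extract_true {Δ : ℕ} {P : ℕ → Finset (ℝ × ℝ)} {μ : ℝ} {j : ℕ} {s : Bool} {k l : ℤ}
    {a b : ℝ × ℝ} (hl1 : -(Δ : ℤ) ≤ l) (hl2 : l ≤ (Δ : ℤ))
    (hlt : phiF Δ P μ j s true k l a < psiF Δ P μ j s true k l b) :
    ∃ u v : ℝ × ℝ, QU P μ j s k l a u ∧ QV Δ P μ j s k l true b v ∧ v.2 - 1 < u.2 := by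
  simp only [phiF, psiF, if_true, reduceIte] at hlt
  have hlt' : (insert ((Δ:ℝ) + 5) (VF Δ P μ j s k l true b)).min' (insert_nonempty _ _) <
      (insert (-((Δ:ℝ) + 5)) (UF P μ j s k l a)).max' (insert_nonempty _ _) := by linarith
  have hlR : ((l : ℝ)) ≤ (Δ : ℝ) := by exact_mod_cast hl2
  have hlL : -((Δ : ℝ)) ≤ (l : ℝ) := by exact_mod_cast hl1
  have hDnn : (0 : ℝ) ≤ (Δ : ℝ) := Nat.cast_nonneg _
  have hFle : (insert (-((Δ:ℝ) + 5)) (UF P μ j s k l a)).max' (insert_nonempty _ _) ≤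
      (Δ : ℝ) + 2 := by
    apply Finset.max'_le
    intro z hz
    rcases mem_insert.mp hz with h | h
    · rw [h]; linarith
    · have := UF_bounds h; linarith
  have hGge : -((Δ:ℝ)) - 2 ≤
      (insert ((Δ:ℝ) + 5) (VF Δ P μ j s k l true b)).min' (insert_nonempty _ _) := by
    apply Finset.le_min'
    intro z hz
    rcases mem_insert.mp hz with h | h
    · rw [h]; linarith
    · have := VF_bounds h; linarith
  have hmaxmem := Finset.max'_mem (insert (-((Δ:ℝ) + 5)) (UF P μ j s k l a))
    (insert_nonempty _ _)
  have hminmem := Finset.min'_mem (insert ((Δ:ℝ) + 5) (VF Δ P μ j s k l true b))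
    (insert_nonempty _ _)
  rcases mem_insert.mp hmaxmem with hcase | hmaxUF
  · exfalso; rw [hcase] at hlt'; linarith
  rcases mem_insert.mp hminmem with hcase | hminVF
  · exfalso; rw [hcase] at hlt'; linarith
  obtain ⟨u, hQU, huval⟩ := exists_of_mem_UF hmaxUF
  obtain ⟨v, hQV, hvval⟩ := exists_of_mem_VF hminVF
  simp only [if_true, reduceIte] at hvval
  refine ⟨u, v, hQU, hQV, ?_⟩
  rw [huval, hvval]
  exact hlt'

open Classical in
lemma extract_false {Δ : ℕ} {P : ℕ → Finset (ℝ × ℝ)} {μ : ℝ} {j : ℕ} {s : Bool} {k l : ℤ}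
    {a b : ℝ × ℝ} (hl1 : -(Δ : ℤ) ≤ l) (hl2 : l ≤ (Δ : ℤ))
    (hlt : phiF Δ P μ j s false k l a < psiF Δ P μ j s false k l b) :
    ∃ u v : ℝ × ℝ, QU P μ j s k l a u ∧ QV Δ P μ j s k l false b v ∧ u.2 - 1 < v.2 := by
  simp only [phiF, psiF, if_false, Bool.false_eq_true, reduceIte] at hlt
  have hlR : ((l : ℝ)) ≤ (Δ : ℝ) := by exact_mod_cast hl2
  have hlL : -((Δ : ℝ)) ≤ (l : ℝ) := by exact_mod_cast hl1
  have hDnn : (0 : ℝ) ≤ (Δ : ℝ) := Nat.cast_nonneg _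
  have hGle : (insert (-((Δ:ℝ) + 5)) (VF Δ P μ j s k l false b)).max' (insert_nonempty _ _) ≤
      (Δ : ℝ) + 2 := by
    apply Finset.max'_le
    intro z hz
    rcases mem_insert.mp hz with h | h
    · rw [h]; linarith
    · have := VF_bounds h; linarith
  have hFge : -((Δ:ℝ)) ≤
      (insert ((Δ:ℝ) + 5) (UF P μ j s k l a)).min' (insert_nonempty _ _) := by
    apply Finset.le_min'
    intro z hz
    rcases mem_insert.mp hz with h | h
    · rw [h]; linarith
    · have := UF_bounds h; linarith
  have hminmem := Finset.min'_mem (insert ((Δ:ℝ) + 5) (UF P μ j s k l a))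
    (insert_nonempty _ _)
  have hmaxmem := Finset.max'_mem (insert (-((Δ:ℝ) + 5)) (VF Δ P μ j s k l false b))
    (insert_nonempty _ _)
  rcases mem_insert.mp hminmem with hcase | hminUF
  · exfalso; rw [hcase] at hlt; linarith
  rcases mem_insert.mp hmaxmem with hcase | hmaxVF
  · exfalso; rw [hcase] at hlt; linarith
  obtain ⟨u, hQU, huval⟩ := exists_of_mem_UF hminUF
  obtain ⟨v, hQV, hvval⟩ := exists_of_mem_VF hmaxVF
  simp only [if_false, Bool.false_eq_true, reduceIte] at hvval
  refine ⟨u, v, hQU, hQV, ?_⟩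
  have : u.2 < v.2 + 1 := by rw [huval, hvval]; exact hlt
  linarith

lemma bridge (Δ : ℕ) (P : ℕ → Finset (ℝ × ℝ)) (μ : ℝ)
    (hg3 : ∀ i ≤ Δ, ∀ i' ≤ Δ, ∀ p ∈ P i, ∀ p' ∈ P i', p.2 - p'.2 ≠ 1)
    (a b : ℝ × ℝ) (ha : a ∈ P 0)
    (ha1 : 0 < a.1) (ha2 : a.1 < 1) (ha3 : 0 < a.2) (ha4 : a.2 < 1)
    (hb : b ∈ P Δ) :
    (∃ p : ℕ → ℝ × ℝ, ∃ j < Δ, p 0 = a ∧ p Δ = b ∧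
        (∀ i, 0 < i → i < Δ → p i ∈ P i) ∧ (∀ i < Δ, dist (p i) (p (i + 1)) ≤ 1) ∧
        ((μ < Int.fract (p j).1 ∧ Int.fract (p (j + 1)).1 < μ) ∨
          (Int.fract (p j).1 < μ ∧ μ < Int.fract (p (j + 1)).1))) ↔
      (∃ j < Δ, ∃ s pc : Bool, ∃ k l : ℤ, -(Δ : ℤ) ≤ k ∧ k ≤ (Δ : ℤ) ∧ -(Δ : ℤ) ≤ l ∧
        l ≤ (Δ : ℤ) ∧ phiF Δ P μ j s pc k l a < psiF Δ P μ j s pc k l b) := by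
  constructor
  · rintro ⟨p, j, hj, h0, hD, hmem, hdist, hcross⟩
    obtain ⟨s, hfu, hfv⟩ : ∃ s : Bool,
        (if s then μ < Int.fract (p j).1 else Int.fract (p j).1 < μ) ∧
        (if s then Int.fract (p (j + 1)).1 < μ else μ < Int.fract (p (j + 1)).1) := by
      rcases hcross with ⟨c1, c2⟩ | ⟨c1, c2⟩
      · exact ⟨true, by simpa using c1, by simpa using c2⟩
      · exact ⟨false, by simpa using c1, by simpa using c2⟩
    have hjr : (j : ℝ) + 1 ≤ (Δ : ℝ) := by exact_mod_cast hj
    have hdj : dist (p 0) (p j) ≤ (j : ℝ) := chain_dist p j (fun i hi => hdist i (by omega))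
    have hxa : |(p j).1 - a.1| ≤ (j : ℝ) := by
      have h' : dist (p j).1 (p 0).1 ≤ dist (p j) (p 0) := by
        rw [Prod.dist_eq]; exact le_max_left _ _
      rw [Real.dist_eq, h0] at h'
      calc |(p j).1 - a.1| ≤ dist (p j) a := h'
        _ = dist (p 0) (p j) := by rw [← h0, dist_comm]
        _ ≤ (j : ℝ) := hdj
    have hya : |(p j).2 - a.2| ≤ (j : ℝ) := by
      have h' : dist (p j).2 (p 0).2 ≤ dist (p j) (p 0) := by
        rw [Prod.dist_eq]; exact le_max_right _ _
      rw [Real.dist_eq, h0] at h'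
      calc |(p j).2 - a.2| ≤ dist (p j) a := h'
        _ = dist (p 0) (p j) := by rw [← h0, dist_comm]
        _ ≤ (j : ℝ) := hdj
    have hk1 : -(Δ : ℤ) ≤ ⌊(p j).1⌋ := by
      apply Int.le_floor.mpr
      have h' := abs_le.mp hxa
      push_cast
      linarith [h'.1, h'.2]
    have hk2 : ⌊(p j).1⌋ ≤ (Δ : ℤ) := by
      have h2 : ⌊(p j).1⌋ < (Δ : ℤ) + 1 := by
        apply Int.floor_lt.mpr
        have h' := abs_le.mp hxa
        push_cast
        linarith [h'.1, h'.2]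
      omega
    have hl1 : -(Δ : ℤ) ≤ ⌊(p j).2⌋ := by
      apply Int.le_floor.mpr
      have h' := abs_le.mp hya
      push_cast
      linarith [h'.1, h'.2]
    have hl2 : ⌊(p j).2⌋ ≤ (Δ : ℤ) := by
      have h2 : ⌊(p j).2⌋ < (Δ : ℤ) + 1 := by
        apply Int.floor_lt.mpr
        have h' := abs_le.mp hya
        push_cast
        linarith [h'.1, h'.2]
      omega
    have humem : ∃ i, i ≤ Δ ∧ p j ∈ P i := by
      rcases Nat.eq_zero_or_pos j with hz | hz
      · subst hz; exact ⟨0, by omega, by rw [h0]; exact ha⟩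
      · exact ⟨j, by omega, hmem j hz hj⟩
    have hvmem : ∃ i, i ≤ Δ ∧ p (j + 1) ∈ P i := by
      by_cases hDe : j + 1 = Δ
      · exact ⟨Δ, le_rfl, by rw [hDe, hD]; exact hb⟩
      · exact ⟨j + 1, by omega, hmem (j + 1) (by omega) (by omega)⟩
    obtain ⟨iu, hiu, hup⟩ := humem
    obtain ⟨iv, hiv, hvp⟩ := hvmem
    have hne1 : (p j).2 - (p (j + 1)).2 ≠ 1 := hg3 iu hiu iv hiv _ hup _ hvp
    have hne2 : (p (j + 1)).2 - (p j).2 ≠ 1 := hg3 iv hiv iu hiu _ hvp _ hup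
    obtain ⟨hdx, hdy⟩ := dist_pair.mp (hdist j hj)
    have hvx := (xcompat μ s ⌊(p j).1⌋ (p j).1 (p (j + 1)).1 rfl hfu hfv).mp hdx
    have hvx2 : (if s then Int.fract (p (j + 1)).1 < μ ∧
          (⌊(p (j + 1)).1⌋ = ⌊(p j).1⌋ ∨ ⌊(p (j + 1)).1⌋ = ⌊(p j).1⌋ + 1)
        else μ < Int.fract (p (j + 1)).1 ∧
          (⌊(p (j + 1)).1⌋ = ⌊(p j).1⌋ - 1 ∨ ⌊(p (j + 1)).1⌋ = ⌊(p j).1⌋)) := by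
      cases s <;> simp only [if_true, if_false, Bool.false_eq_true, reduceIte] at hfv hvx ⊢ <;>
        exact ⟨hfv, hvx⟩
    obtain ⟨hrow3, hyc1, hyc2⟩ :=
      yfloor ⌊(p j).2⌋ (p j).2 (p (j + 1)).2 rfl hdy hne1 hne2
    have hQU : QU P μ j s ⌊(p j).1⌋ ⌊(p j).2⌋ a (p j) :=
      ⟨⟨p, h0, rfl, fun i hi hij => hmem i hi (by omega), fun i hij => hdist i (by omega)⟩,
        rfl, rfl, hfu⟩
    have hbck : Bck Δ P (j + 1) b (p (j + 1)) :=
      ⟨p, rfl, hD, fun i h1 h2 => hmem i (by omega) h2, fun i h1 h2 => hdist i h2⟩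
    refine ⟨j, hj, s, ?_⟩
    rcases hrow3 with hr | hr | hr
    · refine ⟨true, ⌊(p j).1⌋, ⌊(p j).2⌋, hk1, hk2, hl1, hl2, ?_⟩
      have hQV : QV Δ P μ j s ⌊(p j).1⌋ ⌊(p j).2⌋ true b (p (j + 1)) :=
        ⟨hbck, hvx2, by simp only [if_true, reduceIte]; exact Or.inl hr⟩
      exact piece_lt_true hj hQU hQV hyc1
    · refine ⟨true, ⌊(p j).1⌋, ⌊(p j).2⌋, hk1, hk2, hl1, hl2, ?_⟩
      have hQV : QV Δ P μ j s ⌊(p j).1⌋ ⌊(p j).2⌋ true b (p (j + 1)) :=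
        ⟨hbck, hvx2, by simp only [if_true, reduceIte]; exact Or.inr hr⟩
      exact piece_lt_true hj hQU hQV hyc1
    · refine ⟨false, ⌊(p j).1⌋, ⌊(p j).2⌋, hk1, hk2, hl1, hl2, ?_⟩
      have hQV : QV Δ P μ j s ⌊(p j).1⌋ ⌊(p j).2⌋ false b (p (j + 1)) :=
        ⟨hbck, hvx2, by simp only [if_false, Bool.false_eq_true, reduceIte]; exact hr⟩
      exact piece_lt_false hj hQU hQV hyc2
  · rintro ⟨j, hj, s, pc, k, l, hk1, hk2, hl1, hl2, hlt⟩
    have key : ∃ u v : ℝ × ℝ, QU P μ j s k l a u ∧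
        (Bck Δ P (j + 1) b v ∧
          (if s then Int.fract v.1 < μ ∧ (⌊v.1⌋ = k ∨ ⌊v.1⌋ = k + 1)
            else μ < Int.fract v.1 ∧ (⌊v.1⌋ = k - 1 ∨ ⌊v.1⌋ = k))) ∧
        |u.2 - v.2| ≤ 1 ∧ (if s then μ < Int.fract u.1 else Int.fract u.1 < μ) ∧
        (if s then Int.fract v.1 < μ else μ < Int.fract v.1) := by
      cases pc
      · obtain ⟨u, v, hQU, hQV, hyy⟩ := extract_false hl1 hl2 hlt
        obtain ⟨hbck, hvx, hrow⟩ := hQV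
        refine ⟨u, v, hQU, ⟨hbck, hvx⟩, ?_, hQU.2.2.2, ?_⟩
        · apply ybwd l false u.2 v.2 hQU.2.2.1
          · simpa using hrow
          · simpa using hyy
        · cases s
          · simpa using hvx.1
          · simpa using hvx.1
      · obtain ⟨u, v, hQU, hQV, hyy⟩ := extract_true hl1 hl2 hlt
        obtain ⟨hbck, hvx, hrow⟩ := hQV
        refine ⟨u, v, hQU, ⟨hbck, hvx⟩, ?_, hQU.2.2.2, ?_⟩
        · apply ybwd l true u.2 v.2 hQU.2.2.1
          · simpa using hrow
          · simpa using hyy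
        · cases s
          · simpa using hvx.1
          · simpa using hvx.1
    obtain ⟨u, v, hQU, ⟨hbck, hvx⟩, hdy, hfu, hfv⟩ := key
    obtain ⟨hre, hfk, hfl, _⟩ := hQU
    have hdx : |u.1 - v.1| ≤ 1 := by
      apply (xcompat μ s k u.1 v.1 hfk hfu hfv).mpr
      cases s
      · simpa using hvx.2
      · simpa using hvx.2
    have hduv : dist u v ≤ 1 := dist_pair.mpr ⟨hdx, hdy⟩
    obtain ⟨p, hp0, hpD, hpj, hpj1, hpmem, hpdist⟩ := assemble hj hre hbck hduv
    refine ⟨p, j, hj, hp0, hpD, hpmem, hpdist, ?_⟩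
    rw [hpj, hpj1]
    cases s
    · right; exact ⟨by simpa using hfu, by simpa using hfv⟩
    · left; exact ⟨by simpa using hfu, by simpa using hfv⟩

end

end Stmt12


open Stmt12


/-- (Lemma `unitsq3` of the paper.) Points of `ℝ²` are pairs `(x, y)`,
and `dist` on `ℝ × ℝ` is the max-norm distance, so `dist p q ≤ 1` iff the closed axis-aligned
unit squares centered at `p, q` intersect; `Int.fract` is the fractional part. Given finite
sets `P₀, …, P_Δ` with `P₀ ⊆ (0,1)²` and `μ ∈ (0,1)`, under the stated general-position
assumptions there are `D ≤ 4·Δ·(2Δ+1)²` and maps `φ : P₀ → ℝ^D`, `ψ : P_Δ → ℝ^D` such that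
for all `(p₀, p_Δ) ∈ P₀ × P_Δ`: a chain `p₁, …, p_{Δ−1}` with consecutive squares
intersecting whose `x`-coordinates mod 1 cross `μ` at some step `j` exists iff `φ(p₀)` does
not dominate `ψ(p_Δ)`. -/
theorem stmt_12 (Δ : ℕ) (hΔ : 1 ≤ Δ) (P : ℕ → Finset (ℝ × ℝ))
    (hP0 : ∀ p ∈ P 0, p ∈ Set.Ioo (0 : ℝ) 1 ×ˢ Set.Ioo (0 : ℝ) 1)
    (μ : ℝ) (hμ : μ ∈ Set.Ioo (0 : ℝ) 1)
    (hgen1 : ∀ i ≤ Δ, ∀ p ∈ P i, Int.fract p.1 ≠ 0 ∧ Int.fract p.2 ≠ 0)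
    (hgen2 : ∀ i ≤ Δ, ∀ p ∈ P i, Int.fract p.1 ≠ μ)
    (hgen3 : ∀ i ≤ Δ, ∀ i' ≤ Δ, ∀ p ∈ P i, ∀ p' ∈ P i', p.2 - p'.2 ≠ 1) :
    ∃ D : ℕ, D ≤ 4 * Δ * (2 * Δ + 1) ^ 2 ∧
      ∃ φ ψ : ℝ × ℝ → (Fin D → ℝ), ∀ p₀ ∈ P 0, ∀ pΔ ∈ P Δ,
        ((∃ p : ℕ → ℝ × ℝ, ∃ j < Δ, p 0 = p₀ ∧ p Δ = pΔ ∧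
            (∀ i, 0 < i → i < Δ → p i ∈ P i) ∧
            (∀ i < Δ, dist (p i) (p (i + 1)) ≤ 1) ∧
            ((μ < Int.fract (p j).1 ∧ Int.fract (p (j + 1)).1 < μ) ∨
             (Int.fract (p j).1 < μ ∧ μ < Int.fract (p (j + 1)).1))) ↔
          ¬ (∀ m : Fin D, ψ pΔ m ≤ φ p₀ m)) := by
  classical
  refine ⟨Fintype.card (Fin Δ × Bool × Bool × Fin (2 * Δ + 1) × Fin (2 * Δ + 1)), ?_, ?_⟩
  · apply Nat.le_of_eq
    simp only [Fintype.card_prod, Fintype.card_bool, Fintype.card_fin]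
    ring
  · set e := Fintype.equivFin (Fin Δ × Bool × Bool × Fin (2 * Δ + 1) × Fin (2 * Δ + 1))
      with he
    refine ⟨fun p m =>
        phiF Δ P μ (((e.symm m).1 : ℕ)) (e.symm m).2.1 (e.symm m).2.2.1
          ((((e.symm m).2.2.2.1 : ℕ) : ℤ) - (Δ : ℤ))
          ((((e.symm m).2.2.2.2 : ℕ) : ℤ) - (Δ : ℤ)) p,
      fun p m =>
        psiF Δ P μ (((e.symm m).1 : ℕ)) (e.symm m).2.1 (e.symm m).2.2.1
          ((((e.symm m).2.2.2.1 : ℕ) : ℤ) - (Δ : ℤ))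
          ((((e.symm m).2.2.2.2 : ℕ) : ℤ) - (Δ : ℤ)) p, ?_⟩
    intro p₀ hp₀ pΔ hpΔ
    have haI := hP0 p₀ hp₀
    rw [Set.mem_prod, Set.mem_Ioo, Set.mem_Ioo] at haI
    rw [bridge Δ P μ hgen3 p₀ pΔ hp₀ haI.1.1 haI.1.2 haI.2.1 haI.2.2 hpΔ]
    have hiff : (∃ t : Fin Δ × Bool × Bool × Fin (2 * Δ + 1) × Fin (2 * Δ + 1),
        phiF Δ P μ ((t.1 : ℕ)) t.2.1 t.2.2.1 (((t.2.2.2.1 : ℕ) : ℤ) - (Δ : ℤ))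
          (((t.2.2.2.2 : ℕ) : ℤ) - (Δ : ℤ)) p₀ <
        psiF Δ P μ ((t.1 : ℕ)) t.2.1 t.2.2.1 (((t.2.2.2.1 : ℕ) : ℤ) - (Δ : ℤ))
          (((t.2.2.2.2 : ℕ) : ℤ) - (Δ : ℤ)) pΔ) ↔
        (∃ j < Δ, ∃ s pc : Bool, ∃ k l : ℤ, -(Δ : ℤ) ≤ k ∧ k ≤ (Δ : ℤ) ∧ -(Δ : ℤ) ≤ l ∧
          l ≤ (Δ : ℤ) ∧ phiF Δ P μ j s pc k l p₀ < psiF Δ P μ j s pc k l pΔ) := by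
      constructor
      · rintro ⟨⟨⟨j, hj⟩, s, pc, ki, li⟩, hlt⟩
        have hki := ki.isLt
        have hli := li.isLt
        exact ⟨j, hj, s, pc, ((ki : ℕ) : ℤ) - (Δ : ℤ), ((li : ℕ) : ℤ) - (Δ : ℤ),
          by omega, by omega, by omega, by omega, hlt⟩
      · rintro ⟨j, hj, s, pc, k, l, hk1, hk2, hl1, hl2, hlt⟩
        refine ⟨(⟨j, hj⟩, s, pc, ⟨(k + (Δ : ℤ)).toNat, by omega⟩,
          ⟨(l + (Δ : ℤ)).toNat, by omega⟩), ?_⟩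
        have ek : (((k + (Δ : ℤ)).toNat : ℕ) : ℤ) - (Δ : ℤ) = k := by omega
        have el : (((l + (Δ : ℤ)).toNat : ℕ) : ℤ) - (Δ : ℤ) = l := by omega
        dsimp only
        rw [ek, el]
        exact hlt
    rw [← hiff]
    constructor
    · rintro ⟨t, hlt⟩
      intro hall
      have h1 : psiF Δ P μ ((t.1 : ℕ)) t.2.1 t.2.2.1 (((t.2.2.2.1 : ℕ) : ℤ) - (Δ : ℤ))
          (((t.2.2.2.2 : ℕ) : ℤ) - (Δ : ℤ)) pΔ ≤
          phiF Δ P μ ((t.1 : ℕ)) t.2.1 t.2.2.1 (((t.2.2.2.1 : ℕ) : ℤ) - (Δ : ℤ))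
          (((t.2.2.2.2 : ℕ) : ℤ) - (Δ : ℤ)) p₀ := by
        have := hall (e t)
        simpa using this
      exact absurd h1 (not_le.mpr hlt)
    · intro hnall
      rw [not_forall] at hnall
      obtain ⟨m, hm⟩ := hnall
      rw [not_le] at hm
      exact ⟨e.symm m, hm⟩
end

section
/- Let d ≥ 2 and let u, v ∈ {0,1}^d (with entries viewed as real numbers). Define the polygonal chains C_u = ⋃_{i=1}^{d−1} [(i, u_i − 1), (i+1, u_{i+1} − 1)] and C'_v = ⋃_{i=1}^{d−1} [(i, 1 − v_i), (i+1, 1 − v_{i+1})], where [a, b] denotes the closed line segment in ℝ² from a to b. Then C_u ∩ C'_v ≠ ∅ if and only if there exists i ∈ {1, …, d} with u_i = 1 and v_i = 1; equivalently, the chains are disjoint if and only if the vectors u and v are orthogonal. -/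
set_option linter.unusedTactic false in
private lemma aux14 (d : ℕ) (w : ℕ → ℝ) (j : ℕ) (t x : ℝ)
    (hj1 : 1 ≤ j) (hjd : j < d)
    (hw0 : w j = 0 ∨ w j = 1) (hw1 : w (j+1) = 0 ∨ w (j+1) = 1)
    (ht0 : 0 ≤ t) (ht1 : t ≤ 1)
    (hx : x = j + t)
    (heq : (1 - t) * (1 - w j) + t * (1 - w (j+1)) = 0) :
    1 ≤ ⌊x⌋₊ ∧ ⌊x⌋₊ ≤ d ∧ w ⌊x⌋₊ = 1 := by
  have hwj : (0:ℝ) ≤ 1 - w j := by rcases hw0 with h | h <;> rw [h] <;> norm_num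
  have hwj1 : (0:ℝ) ≤ 1 - w (j+1) := by rcases hw1 with h | h <;> rw [h] <;> norm_num
  have h1 : (1 - t) * (1 - w j) = 0 ∧ t * (1 - w (j+1)) = 0 := by
    constructor <;> nlinarith [mul_nonneg (by linarith : (0:ℝ) ≤ 1 - t) hwj,
      mul_nonneg ht0 hwj1]
  by_cases ht : t = 1
  · have hx' : x = ((j+1 : ℕ) : ℝ) := by push_cast; linarith
    rw [hx', Nat.floor_natCast]
    refine ⟨by omega, by omega, ?_⟩
    have := h1.2
    rw [ht] at this
    nlinarith
  · have htlt : t < 1 := lt_of_le_of_ne ht1 ht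
    have hwj' : w j = 1 := by nlinarith [h1.1]
    have hfl : ⌊x⌋₊ = j := by
      rw [hx, Nat.floor_eq_iff (by positivity)]
      constructor <;> push_cast <;> linarith
    rw [hfl]
    exact ⟨hj1, by omega, hwj'⟩

/-- For `d ≥ 2` and 0/1 vectors `u, v` (indexed by `1, …, d`), the
polygonal chain through the points `(i, u_i − 1)` and the polygonal chain through the points
`(i, 1 − v_i)` intersect iff there is an index `i ∈ {1, …, d}` with `u_i = 1` and `v_i = 1`;
equivalently, the chains are disjoint iff `u` and `v` are orthogonal. -/
theorem stmt_14 (d : ℕ) (hd : 2 ≤ d) (u v : ℕ → ℝ)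
    (hu : ∀ i, 1 ≤ i → i ≤ d → u i = 0 ∨ u i = 1)
    (hv : ∀ i, 1 ≤ i → i ≤ d → v i = 0 ∨ v i = 1) :
    ((⋃ i ∈ Finset.Ico 1 d,
        segment ℝ ((i : ℝ), u i - 1) (((i : ℝ) + 1), u (i + 1) - 1)) ∩
      (⋃ i ∈ Finset.Ico 1 d,
        segment ℝ ((i : ℝ), 1 - v i) (((i : ℝ) + 1), 1 - v (i + 1)))).Nonempty ↔
      ∃ i, 1 ≤ i ∧ i ≤ d ∧ u i = 1 ∧ v i = 1 := by
  constructor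
  · rintro ⟨p, hp1, hp2⟩
    simp only [Set.mem_iUnion, Finset.mem_Ico, segment_eq_image, Set.mem_image,
      Set.mem_Icc] at hp1 hp2
    obtain ⟨j, ⟨hj1, hjd⟩, t, ⟨ht0, ht1⟩, hpt⟩ := hp1
    obtain ⟨k, ⟨hk1, hkd⟩, s, ⟨hs0, hs1⟩, hps⟩ := hp2
    have hpt1 : p.1 = (1 - t) * j + t * ((j:ℝ)+1) := by rw [← hpt]; simp
    have hpt2 : p.2 = (1 - t) * (u j - 1) + t * (u (j+1) - 1) := by rw [← hpt]; simp
    have hps1 : p.1 = (1 - s) * k + s * ((k:ℝ)+1) := by rw [← hps]; simp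
    have hps2 : p.2 = (1 - s) * (1 - v k) + s * (1 - v (k+1)) := by rw [← hps]; simp
    -- y = 0
    have huj : u j = 0 ∨ u j = 1 := hu j hj1 (by omega)
    have huj1 : u (j+1) = 0 ∨ u (j+1) = 1 := hu (j+1) (by omega) (by omega)
    have hvk : v k = 0 ∨ v k = 1 := hv k hk1 (by omega)
    have hvk1 : v (k+1) = 0 ∨ v (k+1) = 1 := hv (k+1) (by omega) (by omega)
    have hyle : p.2 ≤ 0 := by
      rw [hpt2]
      have h1 : u j - 1 ≤ 0 := by rcases huj with h | h <;> rw [h] <;> norm_num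
      have h2 : u (j+1) - 1 ≤ 0 := by rcases huj1 with h | h <;> rw [h] <;> norm_num
      nlinarith
    have hyge : 0 ≤ p.2 := by
      rw [hps2]
      have h1 : 0 ≤ 1 - v k := by rcases hvk with h | h <;> rw [h] <;> norm_num
      have h2 : 0 ≤ 1 - v (k+1) := by rcases hvk1 with h | h <;> rw [h] <;> norm_num
      nlinarith
    have hy : p.2 = 0 := le_antisymm hyle hyge
    have hequ : (1 - t) * (1 - u j) + t * (1 - u (j+1)) = 0 := by
      rw [hy] at hpt2; nlinarith [hpt2]
    have heqv : (1 - s) * (1 - v k) + s * (1 - v (k+1)) = 0 := by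
      rw [hy] at hps2; linarith
    have hxu := aux14 d u j t p.1 hj1 hjd huj huj1 ht0 ht1 (by rw [hpt1]; ring) hequ
    have hxv := aux14 d v k s p.1 hk1 hkd hvk hvk1 hs0 hs1 (by rw [hps1]; ring) heqv
    exact ⟨⌊p.1⌋₊, hxu.1, hxu.2.1, hxu.2.2, hxv.2.2⟩
  · rintro ⟨i, hi1, hid, hui, hvi⟩
    refine ⟨((i:ℝ), 0), ?_, ?_⟩
    · simp only [Set.mem_iUnion, Finset.mem_Ico]
      by_cases hidlt : i < d
      · refine ⟨i, ⟨hi1, hidlt⟩, ?_⟩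
        have : ((i:ℝ), (0:ℝ)) = ((i:ℝ), u i - 1) := by rw [hui]; norm_num
        rw [this]; exact left_mem_segment ℝ _ _
      · have hide : i = d := by omega
        refine ⟨i - 1, ⟨by omega, by omega⟩, ?_⟩
        have h1 : ((i - 1 : ℕ) : ℝ) + 1 = (i : ℝ) := by
          have : i - 1 + 1 = i := by omega
          exact_mod_cast congrArg (Nat.cast : ℕ → ℝ) this
        have h2 : i - 1 + 1 = i := by omega
        have : ((i:ℝ), (0:ℝ)) = (((i-1:ℕ):ℝ) + 1, u (i - 1 + 1) - 1) := by
          rw [h1, h2, hui]; norm_num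
        rw [this]; exact right_mem_segment ℝ _ _
    · simp only [Set.mem_iUnion, Finset.mem_Ico]
      by_cases hidlt : i < d
      · refine ⟨i, ⟨hi1, hidlt⟩, ?_⟩
        have : ((i:ℝ), (0:ℝ)) = ((i:ℝ), 1 - v i) := by rw [hvi]; norm_num
        rw [this]; exact left_mem_segment ℝ _ _
      · have hide : i = d := by omega
        refine ⟨i - 1, ⟨by omega, by omega⟩, ?_⟩
        have h1 : ((i - 1 : ℕ) : ℝ) + 1 = (i : ℝ) := by
          have : i - 1 + 1 = i := by omega
          exact_mod_cast congrArg (Nat.cast : ℕ → ℝ) this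
        have h2 : i - 1 + 1 = i := by omega
        have : ((i:ℝ), (0:ℝ)) = (((i-1:ℕ):ℝ) + 1, 1 - v (i - 1 + 1)) := by
          rw [h1, h2, hvi]; norm_num
        rw [this]; exact right_mem_segment ℝ _ _
end
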